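/- Define polynomials G_n^{(i)} in variables u_1, u_2, ... by G_n^{(i)} = ∑_{π} ∏_{j ∈ D_π} u_j, where the sum is over permutations π ∈ S_n ending in i (π(n) = i). Then G_n^{(i)} = G_n^{(i-1)} + (1 - u_{n-1}) G_{n-1}^{(i-1)} for i > 1, and G_n^{(1)} = u_{n-1} ∑_{j=1}^{n-1} G_{n-1}^{(j)}, with G_1^{(1)} = 1. -/

import Mathlib

/-- The value `π(k+1)` (1-indexed) of a permutation of `{1, …, n}` realized as a
permutation of `Fin n`, read 0-indexed: `permVal n π k = π(k+1) - 1`. -/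
def permVal (n : ℕ) (π : Equiv.Perm (Fin n)) (k : ℕ) : ℕ :=
  if h : k < n then (π ⟨k, h⟩ : ℕ) else k

/-- The descent set `D_π = {j ∈ {1, …, n-1} : π(j) > π(j+1)}`. -/
def descSet (n : ℕ) (π : Equiv.Perm (Fin n)) : Finset ℕ :=
  (Finset.Icc 1 (n - 1)).filter fun j => permVal n π j < permVal n π (j - 1)

/-- The major index `maj(π) = ∑_{j ∈ D_π} j`. -/
def maj (n : ℕ) (π : Equiv.Perm (Fin n)) : ℕ := ∑ j ∈ descSet n π, j

/-- The number of descents `des(π) = |D_π|`. -/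
def des (n : ℕ) (π : Equiv.Perm (Fin n)) : ℕ := (descSet n π).card

/-- `G_n^{(i)} = ∑_π ∏_{j ∈ D_π} u_j`, summed over permutations `π ∈ Sₙ` ending in `i`
(`π(n) = i`), a polynomial in variables `u_1, u_2, …` (with `u_j = X j`). -/
noncomputable def G (n i : ℕ) : MvPolynomial ℕ ℤ :=
  ∑ π ∈ Finset.univ.filter (fun π : Equiv.Perm (Fin n) => permVal n π (n - 1) + 1 = i),
    ∏ j ∈ descSet n π, MvPolynomial.X j

open Equiv Finset MvPolynomial

lemma succAbove_val (n:ℕ) (c : Fin (n+1)) (x : Fin n) :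
    ((c.succAbove x : ℕ) = if (x:ℕ) < (c:ℕ) then (x:ℕ) else (x:ℕ)+1) := by
  rw [Fin.succAbove]
  split
  · rw [if_pos (by simpa [Fin.lt_def] using ‹_›)]; simp
  · have h := ‹¬ x.castSucc < c›
    rw [Fin.lt_def] at h
    simp only [Fin.coe_castSucc, not_lt] at h
    rw [if_neg (not_lt.mpr h)]; simp

/-- insertion of c at the last position -/
def ins (m : ℕ) (c : Fin (m+1)) (σ : Equiv.Perm (Fin m)) : Equiv.Perm (Fin (m+1)) :=
  (finSuccEquiv' (Fin.last m)).trans ((σ.optionCongr).trans (finSuccEquiv' c).symm)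

lemma ins_last (m : ℕ) (c : Fin (m+1)) (σ : Equiv.Perm (Fin m)) :
    ins m c σ (Fin.last m) = c := by
  simp [ins]

lemma ins_castSucc (m : ℕ) (c : Fin (m+1)) (σ : Equiv.Perm (Fin m)) (k : Fin m) :
    ins m c σ (Fin.castSucc k) = c.succAbove (σ k) := by
  simp only [ins, Equiv.trans_apply]
  rw [show Fin.castSucc k = (Fin.last m).succAbove k by rw [Fin.succAbove_last],
    finSuccEquiv'_succAbove]
  simp

lemma permVal_ins (m : ℕ) (c : Fin (m+1)) (σ : Equiv.Perm (Fin m)) (k : ℕ) (hk : k < m) :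
    permVal (m+1) (ins m c σ) k
      = if permVal m σ k < (c:ℕ) then permVal m σ k else permVal m σ k + 1 := by
  have h1 : k < m + 1 := Nat.lt_succ_of_lt hk
  rw [permVal, dif_pos h1, permVal, dif_pos hk]
  have : (⟨k, h1⟩ : Fin (m+1)) = Fin.castSucc ⟨k, hk⟩ := rfl
  rw [this, ins_castSucc, succAbove_val]

lemma permVal_ins_last (m : ℕ) (c : Fin (m+1)) (σ : Equiv.Perm (Fin m)) :
    permVal (m+1) (ins m c σ) m = (c:ℕ) := by
  rw [permVal, dif_pos (Nat.lt_succ_self m)]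
  have : (⟨m, Nat.lt_succ_self m⟩ : Fin (m+1)) = Fin.last m := rfl
  rw [this, ins_last]

lemma descSet_ins (m : ℕ) (hm : 1 ≤ m) (c : Fin (m+1)) (σ : Equiv.Perm (Fin m)) :
    descSet (m+1) (ins m c σ)
      = if (c:ℕ) ≤ permVal m σ (m-1) then insert m (descSet m σ) else descSet m σ := by
  have hIcc : Finset.Icc 1 ((m+1)-1) = insert m (Finset.Icc 1 (m-1)) := by
    simp only [Nat.add_sub_cancel]
    ext j; simp [Finset.mem_insert, Finset.mem_Icc]; omega
  rw [descSet, hIcc, Finset.filter_insert]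
  have hfilter : (Finset.Icc 1 (m-1)).filter
      (fun j => permVal (m+1) (ins m c σ) j < permVal (m+1) (ins m c σ) (j-1))
      = descSet m σ := by
    rw [descSet]
    apply Finset.filter_congr
    intro j hj
    simp only [Finset.mem_Icc] at hj
    have hj1 : j < m := by omega
    have hj2 : j - 1 < m := by omega
    rw [permVal_ins m c σ j hj1, permVal_ins m c σ (j-1) hj2]
    constructor <;> (intro h; split_ifs at h ⊢ <;> omega)
  rw [hfilter]
  have hlastval : permVal (m+1) (ins m c σ) m = (c:ℕ) := permVal_ins_last m c σ
  have hprev : permVal (m+1) (ins m c σ) (m-1)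
      = if permVal m σ (m-1) < (c:ℕ) then permVal m σ (m-1) else permVal m σ (m-1) + 1 :=
    permVal_ins m c σ (m-1) (by omega)
  rw [hlastval, hprev]
  split_ifs with h1 h2 h2 <;> first | rfl | (exfalso; omega)

lemma m_not_mem_descSet (m : ℕ) (σ : Equiv.Perm (Fin m)) : m ∉ descSet m σ := by
  intro h
  rw [descSet, Finset.mem_filter, Finset.mem_Icc] at h
  omega

lemma prod_descSet_ins (m : ℕ) (hm : 1 ≤ m) (c : Fin (m+1)) (σ : Equiv.Perm (Fin m)) :
    (∏ j ∈ descSet (m+1) (ins m c σ), (X j : MvPolynomial ℕ ℤ))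
      = (if (c:ℕ) ≤ permVal m σ (m-1) then X m else 1) * ∏ j ∈ descSet m σ, X j := by
  rw [descSet_ins m hm c σ]
  split_ifs with h
  · rw [Finset.prod_insert (m_not_mem_descSet m σ)]
  · rw [one_mul]

lemma filter_last_eq (m : ℕ) (c : Fin (m+1)) :
    (Finset.univ.filter
        (fun π : Equiv.Perm (Fin (m+1)) => permVal (m+1) π ((m+1) - 1) + 1 = (c:ℕ) + 1))
      = Finset.univ.filter (fun π => π (Fin.last m) = c) := by
  apply Finset.filter_congr
  intro π _
  simp only [Nat.add_sub_cancel, eq_iff_iff, Nat.add_right_cancel_iff]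
  rw [permVal, dif_pos (Nat.lt_succ_self m)]
  have : (⟨m, Nat.lt_succ_self m⟩ : Fin (m+1)) = Fin.last m := rfl
  rw [this]
  exact ⟨fun h => Fin.ext h, fun h => by rw [h]⟩

lemma ins_surj (m : ℕ) (c : Fin (m+1)) (π : Equiv.Perm (Fin (m+1))) (hπ : π (Fin.last m) = c) :
    ∃ σ : Equiv.Perm (Fin m), ins m c σ = π := by
  set e : Option (Fin m) ≃ Option (Fin m) :=
    (finSuccEquiv' (Fin.last m)).symm.trans (π.trans (finSuccEquiv' c)) with he
  have h0 : e none = none := by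
    simp [he, hπ]
  refine ⟨Equiv.removeNone e, ?_⟩
  have hcongr : Equiv.optionCongr (Equiv.removeNone e) = e := by
    ext x
    cases x with
    | none => simp [h0]
    | some a =>
      have hne : e (some a) ≠ none := by
        intro hcontra
        exact (Option.some_ne_none a) (e.injective (hcontra.trans h0.symm))
      obtain ⟨b, hb⟩ := Option.ne_none_iff_exists'.mp hne
      simp only [Equiv.optionCongr_apply, Option.map_some]
      rw [← Equiv.removeNone_some e ⟨b, hb⟩]
  rw [ins, hcongr, he]
  ext x
  simp

lemma permVal_last_lt (m : ℕ) (hm : 1 ≤ m) (σ : Equiv.Perm (Fin m)) :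
    permVal m σ (m-1) < m := by
  rw [permVal, dif_pos (by omega : m - 1 < m)]
  exact Fin.is_lt _

lemma G_succ (m : ℕ) (hm : 1 ≤ m) (c : Fin (m+1)) :
    G (m+1) ((c:ℕ)+1)
      = ∑ σ : Equiv.Perm (Fin m),
          (if (c:ℕ) ≤ permVal m σ (m-1) then (X m : MvPolynomial ℕ ℤ) else 1)
            * ∏ j ∈ descSet m σ, X j := by
  rw [G, filter_last_eq m c]
  symm
  apply Finset.sum_bij (fun σ _ => ins m c σ)
  · intro σ _
    simp [ins_last]
  · intro σ _ τ _ h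
    ext k
    have := congrArg (fun p : Equiv.Perm (Fin (m+1)) => p (Fin.castSucc k)) h
    simp only [ins_castSucc] at this
    exact congrArg Fin.val (Fin.succAbove_right_injective this)
  · intro π hπ
    simp only [Finset.mem_filter, Finset.mem_univ, true_and] at hπ
    obtain ⟨σ, hσ⟩ := ins_surj m c π hπ
    exact ⟨σ, Finset.mem_univ σ, hσ⟩
  · intro σ _
    exact (prod_descSet_ins m hm c σ).symm

/-- Algorithm G: `G_1^{(1)} = 1`, `G_n^{(1)} = u_{n-1} ∑_{j=1}^{n-1} G_{n-1}^{(j)}`, and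
`G_n^{(i)} = G_n^{(i-1)} + (1 - u_{n-1}) G_{n-1}^{(i-1)}` for `i > 1`. -/
theorem stmt_17 :
    G 1 1 = 1 ∧
    (∀ n : ℕ, 2 ≤ n →
      G n 1 = MvPolynomial.X (n - 1) * ∑ j ∈ Finset.Icc 1 (n - 1), G (n - 1) j) ∧
    (∀ n i : ℕ, 2 ≤ n → 1 < i → i ≤ n →
      G n i = G n (i - 1) + (1 - MvPolynomial.X (n - 1)) * G (n - 1) (i - 1)) := by
  refine ⟨?_, ?_, ?_⟩
  · -- G 1 1 = 1
    rw [G]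
    have h1 : descSet 1 (1 : Equiv.Perm (Fin 1)) = ∅ := by decide
    have huniv : (Finset.univ.filter
        (fun π : Equiv.Perm (Fin 1) => permVal 1 π (1-1) + 1 = 1)) = {1} := by decide
    rw [huniv, Finset.sum_singleton, h1, Finset.prod_empty]
  · -- part 2
    intro n hn
    obtain ⟨m, rfl⟩ : ∃ m, n = m + 1 := ⟨n - 1, by omega⟩
    have hm : 1 ≤ m := by omega
    have := G_succ m hm 0
    simp only [Fin.val_zero, zero_add, Nat.zero_le, if_true] at this
    rw [this]
    simp only [Nat.add_sub_cancel]
    rw [Finset.mul_sum, ← Finset.sum_fiberwise_of_maps_to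
      (g := fun σ : Equiv.Perm (Fin m) => permVal m σ (m-1) + 1)
      (t := Finset.Icc 1 m)
      (fun σ _ => by
        simp only [Finset.mem_Icc]
        have := permVal_last_lt m hm σ
        omega)
      (fun σ => X m * ∏ j ∈ descSet m σ, (X j : MvPolynomial ℕ ℤ))]
    apply Finset.sum_congr rfl
    intro j _
    rw [G, Finset.mul_sum]
  · -- part 3
    intro n i hn hi hin
    obtain ⟨m, rfl⟩ : ∃ m, n = m + 1 := ⟨n - 1, by omega⟩
    have hm : 1 ≤ m := by omega
    have hc1 : i - 1 < m + 1 := by omega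
    have hc2 : i - 2 < m + 1 := by omega
    have h1 := G_succ m hm ⟨i - 1, hc1⟩
    have h2 := G_succ m hm ⟨i - 2, hc2⟩
    simp only [Fin.val_mk] at h1 h2
    rw [show i - 1 + 1 = i by omega] at h1
    rw [show i - 2 + 1 = i - 1 by omega] at h2
    rw [Nat.add_sub_cancel, h1, h2]
    have hG : G m (i-1) = ∑ σ : Equiv.Perm (Fin m),
        (if permVal m σ (m-1) + 1 = i - 1 then (1:MvPolynomial ℕ ℤ) else 0)
          * ∏ j ∈ descSet m σ, X j := by
      rw [G, Finset.sum_filter]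
      apply Finset.sum_congr rfl
      intro σ _
      split_ifs <;> simp
    rw [hG, Finset.mul_sum, ← Finset.sum_add_distrib]
    apply Finset.sum_congr rfl
    intro σ _
    set v := permVal m σ (m-1)
    set p := ∏ j ∈ descSet m σ, (X j : MvPolynomial ℕ ℤ)
    rw [← mul_assoc]
    rw [← add_mul]
    congr 1
    by_cases hv : v + 1 = i - 1
    · rw [if_neg (by omega), if_pos (by omega), if_pos hv, mul_one]
      ring
    · rw [if_neg hv, mul_zero, add_zero]
      by_cases hle : i - 1 ≤ v
      · rw [if_pos hle, if_pos (by omega)]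
      · rw [if_neg hle, if_neg (by omega)]
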